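/- Let k, t ≥ 2 be coprime integers, let 1 ≤ r ≤ y ≤ t and r < s ≤ t. If k ≥ y(y+1), then for all sufficiently large n, D_k^×(r,t;n) > D_k^×(s,t;n). -/

import Mathlib

open scoped Real

/-- `Dkx k t r n` is the number of parts congruent to `r` mod `t`, counted with
multiplicity, among all partitions of `n` into parts not divisible by `k`. -/
noncomputable def Dkx (k t r n : ℕ) : ℕ :=
  ∑ p : n.Partition,
    if ∀ i ∈ p.parts, ¬ k ∣ i then (p.parts.filter (fun i => i % t = r % t)).card else 0

open Finset

namespace Stmt3Aux






lemma div_succ_le (u v X : ℕ) (hu : 0 < u) (huv : u < v) (hX : u * v ≤ X) :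
    X / v + 1 ≤ X / u := by
  have h1 : X / v * v ≤ X := Nat.div_mul_le_self X v
  rw [Nat.le_div_iff_mul_le hu]
  have hv : 0 < v := lt_trans hu huv
  have h2 : (X / v + 1) * u * v ≤ X * v := by nlinarith
  exact Nat.le_of_mul_le_mul_right h2 hv

lemma div_add_div_le (X r s ρ : ℕ) (hr : 0 < r) (hs : 0 < s) (hρ : 0 < ρ)
    (h : r * ρ + r * s ≤ s * ρ) : X / s + X / ρ ≤ X / r := by
  have h1 : X / s * s ≤ X := Nat.div_mul_le_self X s
  have h2 : X / ρ * ρ ≤ X := Nat.div_mul_le_self X ρ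
  rw [Nat.le_div_iff_mul_le hr]
  have h3 : (X / s + X / ρ) * r * (s * ρ) ≤ X * (s * ρ) := by
    have e0 : (X / s + X / ρ) * r * (s * ρ) = X / s * s * (r * ρ) + X / ρ * ρ * (r * s) := by
      ring
    rw [e0]
    calc X / s * s * (r * ρ) + X / ρ * ρ * (r * s)
        ≤ X * (r * ρ) + X * (r * s) :=
          add_le_add (Nat.mul_le_mul_right _ h1) (Nat.mul_le_mul_right _ h2)
      _ = X * (r * ρ + r * s) := by ring
      _ ≤ X * (s * ρ) := Nat.mul_le_mul_left _ h
  exact Nat.le_of_mul_le_mul_right h3 (by positivity)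

lemma telescope1 (a b : ℕ → ℕ) (M : ℕ) (h : ∀ i, a (i + 1) ≤ b i) :
    ∑ i ∈ range M, a i ≤ a 0 + ∑ i ∈ range M, b i := by
  cases M with
  | zero => simp
  | succ M =>
    rw [Finset.sum_range_succ' a M]
    have : ∑ i ∈ range M, a (i + 1) ≤ ∑ i ∈ range M, b i :=
      Finset.sum_le_sum fun i _ => h i
    have hb : ∑ i ∈ range M, b i ≤ ∑ i ∈ range (M + 1), b i := by
      rw [Finset.sum_range_succ]; omega
    omega

lemma telescope2 (a b : ℕ → ℕ) (M : ℕ) (h : ∀ i, a (i + 1) ≤ b i) (hb0 : b 0 ≤ a 0) :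
    ∑ i ∈ range M, a i + b 0 ≤ a 0 + a 1 + ∑ i ∈ range M, b i := by
  cases M with
  | zero => simpa using by omega
  | succ M =>
    rw [Finset.sum_range_succ' a M, Finset.sum_range_succ' b M]
    have h2 := telescope1 (fun i => a (i + 1)) (fun i => b (i + 1)) M (fun i => h (i + 1))
    simp only [zero_add] at h2
    omega






variable (k t : ℕ)

/-- number of `m ∈ [1, Y]` with `m ≡ c [MOD t]`. -/
def R0 (c Y : ℕ) : ℕ := ((Icc 1 Y).filter (fun m => m % t = c % t)).card

def C0 (c Y : ℕ) : ℕ := ((Icc 1 Y).filter (fun m => m % t = c % t ∧ k ∣ m)).card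

def cnt (c Y : ℕ) : ℕ := ((Icc 1 Y).filter (fun m => m % t = c % t ∧ ¬ k ∣ m)).card

lemma cnt_add_C0 (c Y : ℕ) : cnt k t c Y + C0 k t c Y = R0 t c Y := by
  classical
  unfold cnt C0 R0
  rw [← Finset.filter_filter (fun m => m % t = c % t) (fun m => ¬ k ∣ m),
      ← Finset.filter_filter (fun m => m % t = c % t) (fun m => k ∣ m)]
  rw [Nat.add_comm]
  exact Finset.card_filter_add_card_filter_not (fun m => k ∣ m)

lemma class_ge {c m : ℕ} (hm : 1 ≤ m) (h : m % t = c % t) (hc1 : 1 ≤ c) (hct : c ≤ t) :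
    c ≤ m := by
  rcases eq_or_lt_of_le hct with h1 | h1
  · subst h1
    have : c ∣ m := Nat.dvd_of_mod_eq_zero (by rw [h, Nat.mod_self])
    exact Nat.le_of_dvd hm this
  · rw [Nat.mod_eq_of_lt h1] at h
    calc c = m % t := h.symm
      _ ≤ m := Nat.mod_le m t

lemma R0_le (r s Y : ℕ) (hr1 : 1 ≤ r) (hrs : r < s) (hst : s ≤ t) :
    R0 t s Y ≤ R0 t r Y := by
  classical
  apply Finset.card_le_card_of_injOn (fun m => m - (s - r))
  · intro m hm
    simp only [Finset.mem_coe, mem_filter, mem_Icc] at hm ⊢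
    obtain ⟨⟨hm1, hmY⟩, hmod⟩ := hm
    have hsm : s ≤ m := class_ge t hm1 hmod (by omega) hst
    refine ⟨⟨by omega, by omega⟩, ?_⟩
    have hdvd : t ∣ m - s := (Nat.modEq_iff_dvd' hsm).mp (Nat.ModEq.symm hmod)
    obtain ⟨u, hu⟩ := hdvd
    have he : m - (s - r) = r + t * u := by omega
    rw [he, Nat.add_mul_mod_self_left]
  · intro m1 h1 m2 h2 he
    simp only [Finset.coe_filter, Set.mem_setOf_eq, mem_Icc] at h1 h2
    have hs1 : s ≤ m1 := class_ge t h1.1.1 h1.2 (by omega) hst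
    have hs2 : s ≤ m2 := class_ge t h2.1.1 h2.2 (by omega) hst
    have he' : m1 - (s - r) = m2 - (s - r) := he
    omega

lemma R0_strict (r s Y : ℕ) (hr1 : 1 ≤ r) (hrs : r < s) (hst : s ≤ t)
    (hY1 : r ≤ Y) (hY2 : Y < s) : R0 t s Y + 1 ≤ R0 t r Y := by
  classical
  have h0 : R0 t s Y = 0 := by
    unfold R0
    rw [Finset.card_eq_zero]
    rw [Finset.eq_empty_iff_forall_notMem]
    intro m hm
    simp only [mem_filter, mem_Icc] at hm
    have := class_ge t hm.1.1 hm.2 (by omega) hst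
    omega
  have h1 : 1 ≤ R0 t r Y := by
    unfold R0
    rw [Nat.one_le_iff_ne_zero, ← Nat.pos_iff_ne_zero, Finset.card_pos]
    exact ⟨r, by simp [mem_filter, mem_Icc, hr1, hY1]⟩
  omega

lemma card_j_mul_le (X u : ℕ) (hu : 0 < u) :
    ((Icc 1 X).filter (fun j => j * u ≤ X)).card = X / u := by
  classical
  have : (Icc 1 X).filter (fun j => j * u ≤ X) = Icc 1 (X / u) := by
    ext j
    simp only [mem_filter, mem_Icc]
    constructor
    · rintro ⟨⟨h1, h2⟩, h3⟩
      exact ⟨h1, (Nat.le_div_iff_mul_le hu).mpr h3⟩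
    · rintro ⟨h1, h2⟩
      have h3 : j * u ≤ X := (Nat.le_div_iff_mul_le hu).mp h2
      have h4 : j ≤ j * u := Nat.le_mul_of_pos_right j hu
      exact ⟨⟨h1, by omega⟩, h3⟩
  rw [this]
  simp


section rho

variable {k t c ρ : ℕ}
variable (hk : 2 ≤ k) (ht : 2 ≤ t) (hcop : Nat.Coprime k t)
variable (hρ1 : 0 < ρ) (hρ2 : ρ % t = c % t) (hρ3 : k ∣ ρ)
variable (hρmin : ∀ x, 0 < x → x % t = c % t → k ∣ x → ρ ≤ x)

lemma exists_class_elt (hcop : Nat.Coprime k t) (hk : 2 ≤ k) (ht : 2 ≤ t) (c : ℕ) :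
    ∃ x, 0 < x ∧ x % t = c % t ∧ k ∣ x := by
  obtain ⟨z, hz⟩ := Nat.chineseRemainder hcop 0 c
  refine ⟨z + k * t, ?_, ?_, ?_⟩
  · have : 0 < k * t := by positivity
    omega
  · have h1 : (z + k * t) % t = z % t := by
      rw [Nat.mul_comm, Nat.add_mul_mod_self_left]
    rw [h1]
    exact hz.2
  · have h1 : k ∣ z := by
      have := hz.1
      unfold Nat.ModEq at this
      simp at this
      exact Nat.dvd_of_mod_eq_zero this
    exact Nat.dvd_add h1 (Dvd.intro t rfl)

include hρ1 hρ2 hρ3 hρmin hcop in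
lemma class_k_iff {m : ℕ} :
    (0 < m ∧ m % t = c % t ∧ k ∣ m) ↔ ∃ i, m = ρ + i * (k * t) := by
  constructor
  · rintro ⟨hm1, hm2, hm3⟩
    have hle : ρ ≤ m := hρmin m hm1 hm2 hm3
    have hdt : t ∣ m - ρ := by
      have : ρ % t = m % t := by rw [hρ2, hm2]
      exact (Nat.modEq_iff_dvd' hle).mp this
    have hdk : k ∣ m - ρ := Nat.dvd_sub hm3 hρ3
    have hdkt : k * t ∣ m - ρ := Nat.Coprime.mul_dvd_of_dvd_of_dvd hcop hdk hdt
    obtain ⟨i, hi⟩ := hdkt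
    have hi' : m - ρ = i * (k * t) := by rw [hi]; ring
    exact ⟨i, by omega⟩
  · rintro ⟨i, rfl⟩
    refine ⟨by omega, ?_, ?_⟩
    · rw [Nat.mul_comm k t, Nat.mul_left_comm, Nat.add_mul_mod_self_left, hρ2]
    · exact Nat.dvd_add hρ3 ⟨i * t, by ring⟩

include hρ1 hρ2 hρ3 hρmin in
lemma rho_le_kt (hk : 2 ≤ k) (ht : 2 ≤ t) : ρ ≤ k * t := by
  by_contra hgt
  push_neg at hgt
  have hc : k * t = t * k := Nat.mul_comm k t
  have h1 : 0 < ρ - k * t := by omega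
  have h2 : (ρ - k * t) % t = c % t := by
    have he : ρ = (ρ - k * t) + t * k := by omega
    rw [he, Nat.add_mul_mod_self_left] at hρ2
    exact hρ2
  have h3 : k ∣ ρ - k * t := Nat.dvd_sub hρ3 ⟨t, rfl⟩
  have := hρmin _ h1 h2 h3
  have hkt : 0 < k * t := Nat.mul_pos (by omega) (by omega)
  omega

include hρ3 hρ1 in
lemma k_le_rho : k ≤ ρ := Nat.le_of_dvd hρ1 hρ3

include hcop hρ1 hρ2 hρ3 hρmin in
lemma C0_eq_ind_sum (hk : 2 ≤ k) (ht : 2 ≤ t) (N Y : ℕ) (hYN : Y ≤ N) :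
    C0 k t c Y = ∑ i ∈ range (N + 1), if ρ + i * (k * t) ≤ Y then 1 else 0 := by
  classical
  rw [← Finset.card_filter]
  unfold C0
  apply Finset.card_bij' (fun m _ => (m - ρ) / (k * t)) (fun i _ => ρ + i * (k * t))
  · intro m hm
    simp only [mem_filter, mem_Icc] at hm
    obtain ⟨i, hi⟩ := (class_k_iff hcop hρ1 hρ2 hρ3 hρmin).mp ⟨by omega, hm.2.1, hm.2.2⟩
    have hkt : 0 < k * t := Nat.mul_pos (by omega) (by omega)
    have h1 : (m - ρ) / (k * t) = i := by
      rw [hi]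
      simp [Nat.mul_div_cancel _ hkt]
    rw [h1]
    simp only [mem_filter, mem_range]
    have h2 : i ≤ ρ + i * (k * t) := by
      have : i * 1 ≤ i * (k * t) := Nat.mul_le_mul_left i hkt
      omega
    constructor
    · omega
    · omega
  · intro i hi
    simp only [mem_filter, mem_range] at hi
    simp only [mem_filter, mem_Icc]
    have := (class_k_iff hcop hρ1 hρ2 hρ3 hρmin).mpr ⟨i, rfl⟩
    exact ⟨⟨by omega, hi.2⟩, this.2.1, this.2.2⟩
  · intro m hm
    simp only [mem_filter, mem_Icc] at hm
    obtain ⟨i, hi⟩ := (class_k_iff hcop hρ1 hρ2 hρ3 hρmin).mp ⟨by omega, hm.2.1, hm.2.2⟩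
    have hkt : 0 < k * t := Nat.mul_pos (by omega) (by omega)
    have h1 : (m - ρ) / (k * t) = i := by
      rw [hi]; simp [Nat.mul_div_cancel _ hkt]
    rw [h1]; omega
  · intro i hi
    have hkt : 0 < k * t := Nat.mul_pos (by omega) (by omega)
    simp [Nat.mul_div_cancel _ hkt]

include hcop hρ1 hρ2 hρ3 hρmin in
lemma sumC0_eq (hk : 2 ≤ k) (ht : 2 ≤ t) (X : ℕ) :
    ∑ j ∈ Icc 1 X, C0 k t c (X / j) = ∑ i ∈ range (X + 1), X / (ρ + i * (k * t)) := by
  classical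
  have step1 : ∀ j ∈ Icc 1 X, C0 k t c (X / j)
      = ∑ i ∈ range (X + 1), if ρ + i * (k * t) ≤ X / j then 1 else 0 := by
    intro j hj
    simp only [mem_Icc] at hj
    exact C0_eq_ind_sum hcop hρ1 hρ2 hρ3 hρmin hk ht X (X / j) (Nat.div_le_self X j)
  rw [Finset.sum_congr rfl step1, Finset.sum_comm]
  apply Finset.sum_congr rfl
  intro i _
  have hM : 0 < ρ + i * (k * t) := by omega
  have : ∀ j ∈ Icc 1 X, ((if ρ + i * (k * t) ≤ X / j then 1 else 0) : ℕ)
      = if j * (ρ + i * (k * t)) ≤ X then 1 else 0 := by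
    intro j hj
    simp only [mem_Icc] at hj
    have : ρ + i * (k * t) ≤ X / j ↔ j * (ρ + i * (k * t)) ≤ X := by
      rw [Nat.le_div_iff_mul_le (by omega : 0 < j), Nat.mul_comm]
    simp [this]
  rw [Finset.sum_congr rfl this, ← Finset.card_filter]
  exact card_j_mul_le X _ hM

end rho



section master

variable {k t r s ρ σ : ℕ}
variable (hk : 2 ≤ k) (ht : 2 ≤ t) (hcop : Nat.Coprime k t)
variable (hr1 : 1 ≤ r) (hrs : r < s) (hst : s ≤ t) (hrt : r < t) (hkr : r * (r + 1) ≤ k)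
variable (hρ1 : 0 < ρ) (hρ2 : ρ % t = r % t) (hρ3 : k ∣ ρ)
variable (hρmin : ∀ x, 0 < x → x % t = r % t → k ∣ x → ρ ≤ x)
variable (hσ1 : 0 < σ) (hσ2 : σ % t = s % t) (hσ3 : k ∣ σ)
variable (hσmin : ∀ x, 0 < x → x % t = s % t → k ∣ x → σ ≤ x)

include hr1 hrs hst in
lemma sumR0_ineq (X : ℕ) :
    (∑ j ∈ Icc 1 X, R0 t s (X / j)) + X / r ≤ (∑ j ∈ Icc 1 X, R0 t r (X / j)) + X / s := by
  classical
  have key : ∑ j ∈ Icc 1 X, (R0 t s (X / j) + (if j * r ≤ X ∧ ¬ j * s ≤ X then 1 else 0))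
      ≤ ∑ j ∈ Icc 1 X, R0 t r (X / j) := by
    apply Finset.sum_le_sum
    intro j hj
    simp only [mem_Icc] at hj
    have hjpos : 0 < j := by omega
    by_cases hcond : j * r ≤ X ∧ ¬ j * s ≤ X
    · have hY1 : r ≤ X / j := by
        rw [Nat.le_div_iff_mul_le hjpos]
        rw [Nat.mul_comm]; exact hcond.1
      have hY2 : X / j < s := by
        by_contra hge
        push_neg at hge
        exact hcond.2 (by rw [Nat.mul_comm]; exact (Nat.le_div_iff_mul_le hjpos).mp hge)
      have := R0_strict (t := t) r s (X / j) hr1 hrs hst hY1 hY2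
      rw [if_pos hcond]
      omega
    · have := R0_le (t := t) r s (X / j) hr1 hrs hst
      simp only [hcond, if_false]
      omega
  rw [Finset.sum_add_distrib] at key
  have hsplit : (∑ j ∈ Icc 1 X, if j * r ≤ X ∧ ¬ j * s ≤ X then 1 else 0) + X / s = X / r := by
    rw [← Finset.card_filter]
    have h1 : ((Icc 1 X).filter (fun j => j * s ≤ X)).card = X / s :=
      card_j_mul_le X s (by omega)
    have h2 : ((Icc 1 X).filter (fun j => j * r ≤ X)).card = X / r :=
      card_j_mul_le X r (by omega)
    have h3 : ((Icc 1 X).filter (fun j => j * r ≤ X ∧ j * s ≤ X))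
        = (Icc 1 X).filter (fun j => j * s ≤ X) := by
      apply Finset.filter_congr
      intro j hj
      have : j * r ≤ j * s := Nat.mul_le_mul_left j (le_of_lt hrs)
      constructor
      · tauto
      · intro h; exact ⟨by omega, h⟩
    have h4 := Finset.card_filter_add_card_filter_not
      (s := (Icc 1 X).filter (fun j => j * r ≤ X)) (p := fun j => j * s ≤ X)
    rw [Finset.filter_filter, Finset.filter_filter, h3, h2, h1] at h4
    omega
  omega

include hk ht hr1 hrs hkr hρ1 hρ3 in
lemma key_arith : r * ρ + r * s ≤ s * ρ := by
  have hρr : r * (r + 1) ≤ ρ := le_trans hkr (Nat.le_of_dvd hρ1 hρ3)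
  have hd : s = r + 1 + (s - r - 1) := by omega
  set d := s - r - 1 with hdd
  rw [hd]
  have h1 : d * (r * (r + 1)) ≤ d * ρ := Nat.mul_le_mul_left d hρr
  have h2 : r ≤ r * (r + 1) := Nat.le_mul_of_pos_right r (by omega)
  have h3 : d * r ≤ d * (r * (r + 1)) := Nat.mul_le_mul_left d h2
  nlinarith [hρr, h1, h3]

include hk ht hcop hr1 hrs hst hkr hρ1 hρ2 hρ3 hρmin hσ1 hσ2 hσ3 hσmin in
lemma master_le (X : ℕ) :
    ∑ j ∈ Icc 1 X, cnt k t s (X / j) ≤ ∑ j ∈ Icc 1 X, cnt k t r (X / j) := by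
  classical
  have hL1r : (∑ j ∈ Icc 1 X, cnt k t r (X / j)) + (∑ j ∈ Icc 1 X, C0 k t r (X / j))
      = ∑ j ∈ Icc 1 X, R0 t r (X / j) := by
    rw [← Finset.sum_add_distrib]
    exact Finset.sum_congr rfl fun j _ => cnt_add_C0 k t r (X / j)
  have hL1s : (∑ j ∈ Icc 1 X, cnt k t s (X / j)) + (∑ j ∈ Icc 1 X, C0 k t s (X / j))
      = ∑ j ∈ Icc 1 X, R0 t s (X / j) := by
    rw [← Finset.sum_add_distrib]
    exact Finset.sum_congr rfl fun j _ => cnt_add_C0 k t s (X / j)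
  have hCR : ∑ j ∈ Icc 1 X, C0 k t r (X / j)
      = ∑ i ∈ range (X + 1), X / (ρ + i * (k * t)) :=
    sumC0_eq hcop hρ1 hρ2 hρ3 hρmin hk ht X
  have hCS : ∑ j ∈ Icc 1 X, C0 k t s (X / j)
      = ∑ i ∈ range (X + 1), X / (σ + i * (k * t)) :=
    sumC0_eq hcop hσ1 hσ2 hσ3 hσmin hk ht X
  have hi := sumR0_ineq hr1 hrs hst (t := t) X
  have hXsr : X / s ≤ X / r := Nat.div_le_div_left (le_of_lt hrs) (by omega)
  rcases le_or_gt σ ρ with hcase | hcase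
  · have hterm : ∑ i ∈ range (X + 1), X / (ρ + i * (k * t))
        ≤ ∑ i ∈ range (X + 1), X / (σ + i * (k * t)) :=
      Finset.sum_le_sum fun i _ => Nat.div_le_div_left (by omega) (by omega)
    omega
  · have hσkt : σ ≤ k * t := rho_le_kt hσ1 hσ2 hσ3 hσmin hk ht
    have htel : ∑ i ∈ range (X + 1), X / (ρ + i * (k * t))
        ≤ X / (ρ + 0 * (k * t)) + ∑ i ∈ range (X + 1), X / (σ + i * (k * t)) :=
      telescope1 (fun i => X / (ρ + i * (k * t))) (fun i => X / (σ + i * (k * t))) (X + 1)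
        (fun i => Nat.div_le_div_left (by ring_nf; omega) (by omega))
    simp only [Nat.zero_mul, Nat.add_zero] at htel
    have hiii : X / s + X / ρ ≤ X / r :=
      div_add_div_le X r s ρ (by omega) (by omega) (by omega)
        (key_arith hk ht hr1 hrs hkr hρ1 hρ3)
    omega

include hk ht hcop hr1 hrs hst hrt hkr hρ1 hρ2 hρ3 hρmin hσ1 hσ2 hσ3 hσmin in
lemma master_lt (X : ℕ) (hX : r * s + σ * (ρ + k * t) ≤ X) :
    (∑ j ∈ Icc 1 X, cnt k t s (X / j)) + 1 ≤ ∑ j ∈ Icc 1 X, cnt k t r (X / j) := by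
  classical
  have hL1r : (∑ j ∈ Icc 1 X, cnt k t r (X / j)) + (∑ j ∈ Icc 1 X, C0 k t r (X / j))
      = ∑ j ∈ Icc 1 X, R0 t r (X / j) := by
    rw [← Finset.sum_add_distrib]
    exact Finset.sum_congr rfl fun j _ => cnt_add_C0 k t r (X / j)
  have hL1s : (∑ j ∈ Icc 1 X, cnt k t s (X / j)) + (∑ j ∈ Icc 1 X, C0 k t s (X / j))
      = ∑ j ∈ Icc 1 X, R0 t s (X / j) := by
    rw [← Finset.sum_add_distrib]
    exact Finset.sum_congr rfl fun j _ => cnt_add_C0 k t s (X / j)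
  have hCR : ∑ j ∈ Icc 1 X, C0 k t r (X / j)
      = ∑ i ∈ range (X + 1), X / (ρ + i * (k * t)) :=
    sumC0_eq hcop hρ1 hρ2 hρ3 hρmin hk ht X
  have hCS : ∑ j ∈ Icc 1 X, C0 k t s (X / j)
      = ∑ i ∈ range (X + 1), X / (σ + i * (k * t)) :=
    sumC0_eq hcop hσ1 hσ2 hσ3 hσmin hk ht X
  have hi := sumR0_ineq hr1 hrs hst (t := t) X
  have hXsr : X / s ≤ X / r := Nat.div_le_div_left (le_of_lt hrs) (by omega)
  have hrsX : r * s ≤ X := by omega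
  have hstrict : X / s + 1 ≤ X / r := div_succ_le r s X (by omega) hrs hrsX
  have hne : ρ ≠ σ := by
    intro h
    have h1 : r % t = r := Nat.mod_eq_of_lt hrt
    rcases eq_or_lt_of_le hst with h2 | h2
    · rw [← h2] at hρ2 hσ2
      rw [h, hσ2, Nat.mod_self, Nat.mod_eq_of_lt hrs] at hρ2
      omega
    · rw [Nat.mod_eq_of_lt h2] at hσ2
      rw [h, hσ2, h1] at hρ2
      omega
  rcases lt_or_gt_of_ne hne with hcase | hcase
  · -- ρ < σ : telescope2
    have hσkt : σ ≤ k * t := rho_le_kt hσ1 hσ2 hσ3 hσmin hk ht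
    have htel := telescope2 (fun i => X / (ρ + i * (k * t))) (fun i => X / (σ + i * (k * t)))
        (X + 1) (fun i => Nat.div_le_div_left (by ring_nf; omega) (by omega))
        (Nat.div_le_div_left (by omega) (by omega))
    simp only [Nat.zero_mul, Nat.add_zero, Nat.one_mul] at htel
    have hiii : X / s + X / ρ ≤ X / r :=
      div_add_div_le X r s ρ (by omega) (by omega) (by omega)
        (key_arith hk ht hr1 hrs hkr hρ1 hρ3)
    have hiv : X / (ρ + k * t) + 1 ≤ X / σ := by
      apply div_succ_le σ (ρ + k * t) X (by omega) (by omega)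
      calc σ * (ρ + k * t) ≤ r * s + σ * (ρ + k * t) := by omega
        _ ≤ X := hX
    omega
  · -- σ < ρ
    have hterm : ∑ i ∈ range (X + 1), X / (ρ + i * (k * t))
        ≤ ∑ i ∈ range (X + 1), X / (σ + i * (k * t)) :=
      Finset.sum_le_sum fun i _ => Nat.div_le_div_left (by omega) (by omega)
    omega

end master



/-- number of partitions of `N` into parts not divisible by `k`. -/
def pk (k N : ℕ) : ℕ :=
  (Finset.univ.filter (fun p : N.Partition => ∀ i ∈ p.parts, ¬ k ∣ i)).card

lemma pk_zero (k : ℕ) : pk k 0 = 1 := by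
  classical
  unfold pk
  have h1 : ∀ p : Nat.Partition 0, p.parts = 0 := by
    intro p
    rw [Multiset.eq_zero_iff_forall_notMem]
    intro i hi
    have h2 := p.parts_pos hi
    have h3 : i ≤ Multiset.sum p.parts :=
      Multiset.single_le_sum (fun x _ => Nat.zero_le x) i hi
    rw [p.parts_sum] at h3
    omega
  have h2 : (Finset.univ.filter (fun p : Nat.Partition 0 => ∀ i ∈ p.parts, ¬ k ∣ i))
      = {⟨0, by simp, by simp⟩} := by
    apply Finset.eq_singleton_iff_unique_mem.mpr
    constructor
    · rw [Finset.mem_filter]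
      refine ⟨Finset.mem_univ _, ?_⟩
      intro i hi
      simp at hi
    · intro p hp
      apply Nat.Partition.ext
      rw [h1 p]
  rw [h2, Finset.card_singleton]

lemma pk_step (k N : ℕ) (hk : 2 ≤ k) : pk k N ≤ pk k (N + 1) := by
  classical
  unfold pk
  apply Finset.card_le_card_of_injOn
    (fun p => ⟨1 ::ₘ p.parts, by
        intro i hi
        rcases Multiset.mem_cons.mp hi with h | h
        · omega
        · exact p.parts_pos h, by
        rw [Multiset.sum_cons, p.parts_sum]; omega⟩)
  · intro p hp
    simp only [Finset.mem_coe, Finset.mem_filter, Finset.mem_univ, true_and] at hp ⊢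
    intro i hi
    rcases Multiset.mem_cons.mp hi with h | h
    · subst h
      intro hdvd
      have := Nat.le_of_dvd (by omega) hdvd
      omega
    · exact hp i h
  · intro p1 _ p2 _ he
    have he' : (1 ::ₘ p1.parts) = (1 ::ₘ p2.parts) := congrArg Nat.Partition.parts he
    exact Nat.Partition.ext (by
      exact (Multiset.cons_inj_right 1).mp he')

lemma pk_mono (k : ℕ) (hk : 2 ≤ k) {a b : ℕ} (h : a ≤ b) : pk k a ≤ pk k b := by
  induction b with
  | zero => simp at h; subst h; exact le_refl _
  | succ b ih =>
    rcases Nat.lt_or_ge a (b + 1) with h1 | h1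
    · exact le_trans (ih (by omega)) (pk_step k b hk)
    · have : a = b + 1 := by omega
      subst this; exact le_refl _


section identity

variable {k t n : ℕ}

lemma card_filter_parts (n : ℕ) (p : n.Partition) (q : ℕ → Prop) [DecidablePred q] :
    (p.parts.filter q).card = ∑ m ∈ Icc 1 n, if q m then p.parts.count m else 0 := by
  classical
  have hsub : (p.parts.filter q).toFinset ⊆ Icc 1 n := by
    intro m hm
    rw [Multiset.mem_toFinset] at hm
    have hm' := Multiset.mem_of_mem_filter hm
    have h1 : 0 < m := p.parts_pos hm'
    have h2 : m ≤ n := by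
      have h3 : m ≤ Multiset.sum p.parts :=
        Multiset.single_le_sum (fun x _ => Nat.zero_le x) m hm'
      rw [p.parts_sum] at h3
      exact h3
    rw [mem_Icc]
    omega
  rw [← Multiset.toFinset_sum_count_eq (p.parts.filter q)]
  rw [Finset.sum_subset hsub ?_]
  · apply Finset.sum_congr rfl
    intro m _
    rw [Multiset.count_filter]
  · intro m _ hm
    rw [Multiset.count_eq_zero]
    intro hmem
    exact hm (Multiset.mem_toFinset.mpr hmem)

lemma count_eq_sum_ind (n : ℕ) (p : n.Partition) (m : ℕ) (hm : 1 ≤ m) :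
    p.parts.count m = ∑ j ∈ Icc 1 n, if j ≤ p.parts.count m then 1 else 0 := by
  classical
  have hcn : p.parts.count m ≤ n := by
    calc p.parts.count m ≤ Multiset.card p.parts := Multiset.count_le_card m p.parts
      _ ≤ Multiset.sum p.parts := by
          have := Multiset.card_nsmul_le_sum (s := p.parts) (a := 1)
            (fun x hx => p.parts_pos hx)
          simpa using this
      _ = n := p.parts_sum
  rw [← Finset.card_filter]
  have he : (Icc 1 n).filter (fun j => j ≤ p.parts.count m) = Icc 1 (p.parts.count m) := by
    ext j
    simp only [mem_filter, mem_Icc]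
    omega
  rw [he]
  simp

lemma card_count_ge (hk : 2 ≤ k) (m j : ℕ) (hm : 1 ≤ m) (hj : 1 ≤ j) :
    ((Finset.univ.filter (fun p : n.Partition => ∀ i ∈ p.parts, ¬ k ∣ i)).filter
        (fun p => j ≤ p.parts.count m)).card
      = if ¬ k ∣ m ∧ j * m ≤ n then pk k (n - j * m) else 0 := by
  classical
  by_cases hdvd : k ∣ m
  · rw [if_neg (by tauto)]
    rw [Finset.card_eq_zero, Finset.eq_empty_iff_forall_notMem]
    intro p hp
    simp only [mem_filter, Finset.mem_univ, true_and] at hp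
    have hpos : 0 < p.parts.count m := by omega
    have hmem : m ∈ p.parts := Multiset.count_pos.mp hpos
    exact hp.1 m hmem hdvd
  · by_cases hjm : j * m ≤ n
    · rw [if_pos ⟨hdvd, hjm⟩]
      unfold pk
      have hrepeq : (Multiset.replicate j m).sum = j * m := by
        rw [Multiset.sum_replicate, smul_eq_mul]
      have hreple : ∀ p : n.Partition,
          p ∈ (Finset.univ.filter (fun p : n.Partition => ∀ i ∈ p.parts, ¬ k ∣ i)).filter
            (fun p => j ≤ p.parts.count m) → Multiset.replicate j m ≤ p.parts := by
        intro p hp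
        simp only [mem_filter, Finset.mem_univ, true_and] at hp
        exact Multiset.le_count_iff_replicate_le.mp hp.2
      refine Finset.card_bij'
        (fun p hp => (⟨p.parts - Multiset.replicate j m, ?_, ?_⟩ : (n - j * m).Partition))
        (fun q hq => (⟨q.parts + Multiset.replicate j m, ?_, ?_⟩ : n.Partition))
        ?_ ?_ ?_ ?_
      · intro i hi
        exact p.parts_pos (Multiset.mem_of_le (tsub_le_self) hi)
      · have hle := hreple p hp
        have h1 : (p.parts - Multiset.replicate j m) + Multiset.replicate j m = p.parts :=
          tsub_add_cancel_of_le hle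
        have h2 := congrArg Multiset.sum h1
        rw [Multiset.sum_add, hrepeq, p.parts_sum] at h2
        have h3 : j * m ≤ (p.parts - Multiset.replicate j m).sum + j * m := by omega
        omega
      · intro i hi
        rcases Multiset.mem_add.mp hi with h | h
        · exact q.parts_pos h
        · rw [Multiset.eq_of_mem_replicate h]
          omega
      · rw [Multiset.sum_add, hrepeq, q.parts_sum]
        omega
      · intro p hp
        simp only [mem_filter, Finset.mem_univ, true_and] at hp ⊢
        intro i hi
        exact hp.1 i (Multiset.mem_of_le (tsub_le_self) hi)
      · intro q hq
        simp only [mem_filter, Finset.mem_univ, true_and] at hq ⊢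
        constructor
        · intro i hi
          rcases Multiset.mem_add.mp hi with h | h
          · exact hq i h
          · rw [Multiset.eq_of_mem_replicate h]
            exact hdvd
        · rw [Multiset.count_add, Multiset.count_replicate_self]
          omega
      · intro p hp
        apply Nat.Partition.ext
        exact tsub_add_cancel_of_le (hreple p hp)
      · intro q hq
        apply Nat.Partition.ext
        show q.parts + Multiset.replicate j m - Multiset.replicate j m = q.parts
        exact add_tsub_cancel_right (α := Multiset ℕ) q.parts (Multiset.replicate j m)
    · rw [if_neg (by tauto)]
      rw [Finset.card_eq_zero, Finset.eq_empty_iff_forall_notMem]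
      intro p hp
      simp only [mem_filter, Finset.mem_univ, true_and] at hp
      have hrep : Multiset.replicate j m ≤ p.parts :=
        Multiset.le_count_iff_replicate_le.mp hp.2
      obtain ⟨u, hu⟩ := Multiset.le_iff_exists_add.mp hrep
      have hsum := p.parts_sum
      rw [hu, Multiset.sum_add, Multiset.sum_replicate, smul_eq_mul] at hsum
      omega

end identity


section assemble

lemma Dkx_eq (k t c n : ℕ) (hk : 2 ≤ k) :
    Dkx k t c n = ∑ m ∈ Icc 1 n, ∑ j ∈ Icc 1 n,
      if m % t = c % t ∧ ¬ k ∣ m ∧ j * m ≤ n then pk k (n - j * m) else 0 := by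
  classical
  have step1 : Dkx k t c n
      = ∑ p ∈ Finset.univ.filter (fun p : n.Partition => ∀ i ∈ p.parts, ¬ k ∣ i),
        (p.parts.filter (fun i => i % t = c % t)).card := by
    unfold Dkx
    rw [Finset.sum_filter]
  rw [step1]
  have step2 : ∀ p ∈ Finset.univ.filter (fun p : n.Partition => ∀ i ∈ p.parts, ¬ k ∣ i),
      (p.parts.filter (fun i => i % t = c % t)).card
      = ∑ m ∈ Icc 1 n, if m % t = c % t then p.parts.count m else 0 :=
    fun p _ => card_filter_parts n p _
  rw [Finset.sum_congr rfl step2, Finset.sum_comm]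
  apply Finset.sum_congr rfl
  intro m hm
  simp only [mem_Icc] at hm
  by_cases hmod : m % t = c % t
  · have he1 : ∑ p ∈ Finset.univ.filter (fun p : n.Partition => ∀ i ∈ p.parts, ¬ k ∣ i),
        p.parts.count m
        = ∑ j ∈ Icc 1 n,
          ((Finset.univ.filter (fun p : n.Partition => ∀ i ∈ p.parts, ¬ k ∣ i)).filter
            (fun p => j ≤ p.parts.count m)).card := by
      have hc : ∀ p ∈ Finset.univ.filter (fun p : n.Partition => ∀ i ∈ p.parts, ¬ k ∣ i),
          p.parts.count m = ∑ j ∈ Icc 1 n, if j ≤ p.parts.count m then 1 else 0 :=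
        fun p _ => count_eq_sum_ind n p m (by omega)
      rw [Finset.sum_congr rfl hc, Finset.sum_comm]
      exact Finset.sum_congr rfl fun j _ => (Finset.card_filter _ _).symm
    simp only [hmod, eq_self_iff_true, if_true, true_and]
    rw [he1]
    apply Finset.sum_congr rfl
    intro j hj
    simp only [mem_Icc] at hj
    rw [card_count_ge hk m j (by omega) (by omega)]
  · simp only [hmod, if_false, false_and]
    simp

/-- the weight: number of pairs `(m, j)` with `m` in the class, `k ∤ m`, `j * m = x`. -/
def w (k t c n x : ℕ) : ℕ :=
  ∑ m ∈ Icc 1 n, ∑ j ∈ Icc 1 n, if m % t = c % t ∧ ¬ k ∣ m ∧ j * m = x then 1 else 0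

lemma Dkx_eq_w (k t c n : ℕ) (hk : 2 ≤ k) :
    Dkx k t c n = ∑ x ∈ range (n + 1), w k t c n x * pk k (n - x) := by
  classical
  rw [Dkx_eq k t c n hk]
  unfold w
  symm
  calc ∑ x ∈ range (n + 1),
        (∑ m ∈ Icc 1 n, ∑ j ∈ Icc 1 n,
          if m % t = c % t ∧ ¬ k ∣ m ∧ j * m = x then 1 else 0) * pk k (n - x)
      = ∑ x ∈ range (n + 1), ∑ m ∈ Icc 1 n, ∑ j ∈ Icc 1 n,
          (if m % t = c % t ∧ ¬ k ∣ m ∧ j * m = x then 1 else 0) * pk k (n - x) := by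
        apply Finset.sum_congr rfl
        intro x _
        rw [Finset.sum_mul]
        exact Finset.sum_congr rfl fun m _ => Finset.sum_mul _ _ _
    _ = ∑ m ∈ Icc 1 n, ∑ x ∈ range (n + 1), ∑ j ∈ Icc 1 n,
          (if m % t = c % t ∧ ¬ k ∣ m ∧ j * m = x then 1 else 0) * pk k (n - x) :=
        Finset.sum_comm
    _ = ∑ m ∈ Icc 1 n, ∑ j ∈ Icc 1 n, ∑ x ∈ range (n + 1),
          (if m % t = c % t ∧ ¬ k ∣ m ∧ j * m = x then 1 else 0) * pk k (n - x) :=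
        Finset.sum_congr rfl fun m _ => Finset.sum_comm
    _ = ∑ m ∈ Icc 1 n, ∑ j ∈ Icc 1 n,
          if m % t = c % t ∧ ¬ k ∣ m ∧ j * m ≤ n then pk k (n - j * m) else 0 := ?_
  apply Finset.sum_congr rfl
  intro m _
  apply Finset.sum_congr rfl
  intro j hj
  simp only [mem_Icc] at hj
  by_cases hC : m % t = c % t ∧ ¬ k ∣ m
  · have he : ∀ x ∈ range (n + 1),
        (if m % t = c % t ∧ ¬ k ∣ m ∧ j * m = x then 1 else 0) * pk k (n - x)
        = if j * m = x then pk k (n - x) else 0 := by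
      intro x _
      by_cases hx : j * m = x
      · simp [hx, hC]
      · simp [hx]
    rw [Finset.sum_congr rfl he]
    rw [Finset.sum_ite_eq (range (n + 1)) (j * m) (fun x => pk k (n - x))]
    simp only [mem_range]
    by_cases hjm : j * m ≤ n
    · rw [if_pos (by omega), if_pos ⟨hC.1, hC.2, hjm⟩]
    · rw [if_neg (by omega), if_neg (by tauto)]
  · have he : ∀ x ∈ range (n + 1),
        (if m % t = c % t ∧ ¬ k ∣ m ∧ j * m = x then 1 else 0) * pk k (n - x) = 0 := by
      intro x _
      have : ¬ (m % t = c % t ∧ ¬ k ∣ m ∧ j * m = x) := by tauto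
      simp [this]
    rw [Finset.sum_congr rfl he]
    rw [if_neg (by tauto)]
    simp

lemma w_partial (k t c n X : ℕ) (hX : X ≤ n) :
    ∑ x ∈ range (X + 1), w k t c n x = ∑ j ∈ Icc 1 X, cnt k t c (X / j) := by
  classical
  unfold w
  rw [Finset.sum_comm (s := range (X + 1)) (t := Icc 1 n)]
  have step1 : ∀ m ∈ Icc 1 n,
      (∑ x ∈ range (X + 1), ∑ j ∈ Icc 1 n,
        if m % t = c % t ∧ ¬ k ∣ m ∧ j * m = x then 1 else 0)
      = ∑ j ∈ Icc 1 n, if m % t = c % t ∧ ¬ k ∣ m ∧ j * m ≤ X then 1 else 0 := by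
    intro m _
    rw [Finset.sum_comm]
    apply Finset.sum_congr rfl
    intro j _
    by_cases hC : m % t = c % t ∧ ¬ k ∣ m
    · have he : ∀ x ∈ range (X + 1),
          (if m % t = c % t ∧ ¬ k ∣ m ∧ j * m = x then 1 else 0)
          = if j * m = x then 1 else 0 := by
        intro x _
        by_cases hx : j * m = x
        · simp [hx, hC]
        · simp [hx]
      rw [Finset.sum_congr rfl he]
      rw [Finset.sum_ite_eq (range (X + 1)) (j * m) (fun _ => 1)]
      simp only [mem_range]
      by_cases hjm : j * m ≤ X
      · rw [if_pos (by omega), if_pos ⟨hC.1, hC.2, hjm⟩]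
      · rw [if_neg (by omega), if_neg (by tauto)]
    · have he : ∀ x ∈ range (X + 1),
          (if m % t = c % t ∧ ¬ k ∣ m ∧ j * m = x then 1 else 0) = 0 := by
        intro x _
        have : ¬ (m % t = c % t ∧ ¬ k ∣ m ∧ j * m = x) := by tauto
        simp [this]
      rw [Finset.sum_congr rfl he]
      rw [if_neg (by tauto)]
      simp
  rw [Finset.sum_congr rfl step1, Finset.sum_comm]
  -- now : ∑ j ∈ Icc 1 n, ∑ m ∈ Icc 1 n, ind (class ∧ j*m ≤ X) = ∑ j ∈ Icc 1 X, cnt c (X/j)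
  rw [← Finset.sum_subset (Finset.Icc_subset_Icc_right hX) ?_]
  · apply Finset.sum_congr rfl
    intro j hj
    simp only [mem_Icc] at hj
    rw [← Finset.card_filter]
    unfold cnt
    apply Finset.card_bij' (fun m _ => m) (fun m _ => m)
    · intro m hmem
      simp only [mem_filter, mem_Icc] at hmem ⊢
      obtain ⟨⟨hm1, hm2⟩, hmod, hdvd, hjm⟩ := hmem
      have hmle : m ≤ X / j := (Nat.le_div_iff_mul_le (by omega)).mpr
        (by rw [Nat.mul_comm]; exact hjm)
      exact ⟨⟨hm1, hmle⟩, hmod, hdvd⟩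
    · intro m hmem
      simp only [mem_filter, mem_Icc] at hmem ⊢
      obtain ⟨⟨hm1, hm2⟩, hmod, hdvd⟩ := hmem
      have hjm : j * m ≤ X := by
        rw [Nat.mul_comm]
        exact (Nat.le_div_iff_mul_le (by omega)).mp hm2
      have hmn : m ≤ n := by
        have : X / j ≤ X := Nat.div_le_self X j
        omega
      exact ⟨⟨hm1, hmn⟩, hmod, hdvd, hjm⟩
    · intro m _; rfl
    · intro m _; rfl
  · intro j hj hnot
    simp only [mem_Icc] at hj hnot
    apply Finset.sum_eq_zero
    intro m hmem
    simp only [mem_Icc] at hmem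
    rw [if_neg]
    rintro ⟨-, -, hjm⟩
    have : j ≤ j * m := Nat.le_mul_of_pos_right j (by omega)
    omega

end assemble

lemma abel_int (c f : ℕ → ℤ) (n : ℕ)
    (hC : ∀ X, X ≤ n → 0 ≤ ∑ x ∈ range (X + 1), c x)
    (hf : ∀ x, x < n → f (x + 1) ≤ f x)
    (hfn : 0 ≤ f n) :
    (∑ x ∈ range (n + 1), c x) * f n ≤ ∑ x ∈ range (n + 1), c x * f x := by
  induction n with
  | zero => simp
  | succ n ih =>
    have hfa : f (n + 1) ≤ f n := hf n (by omega)
    have ih' := ih (fun X hX => hC X (by omega)) (fun x hx => hf x (by omega))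
      (le_trans hfn hfa)
    rw [Finset.sum_range_succ (fun x => c x * f x) (n + 1), Finset.sum_range_succ c (n + 1)]
    have h1 : (∑ x ∈ range (n + 1), c x) * f (n + 1)
        ≤ (∑ x ∈ range (n + 1), c x) * f n :=
      mul_le_mul_of_nonneg_left hfa (hC n (by omega))
    rw [add_mul]
    exact add_le_add (le_trans h1 ih') (le_refl _)

end Stmt3Aux

open Stmt3Aux

theorem stmt3 (k t r s y : ℕ) (hk : 2 ≤ k) (ht : 2 ≤ t) (hcop : Nat.Coprime k t)
    (hr1 : 1 ≤ r) (hry : r ≤ y) (hyt : y ≤ t) (hrs : r < s) (hst : s ≤ t)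
    (hky : k ≥ y * (y + 1)) :
    ∃ N : ℕ, ∀ n ≥ N, Dkx k t r n > Dkx k t s n := by
  classical
  have hrt : r < t := lt_of_lt_of_le hrs hst
  have hkr : r * (r + 1) ≤ k :=
    le_trans (Nat.mul_le_mul hry (by omega)) hky
  have hρex : ∃ x, 0 < x ∧ x % t = r % t ∧ k ∣ x := exists_class_elt hcop hk ht r
  have hσex : ∃ x, 0 < x ∧ x % t = s % t ∧ k ∣ x := exists_class_elt hcop hk ht s
  set ρ := Nat.find hρex with hρdef
  set σ := Nat.find hσex with hσdef
  obtain ⟨hρ1, hρ2, hρ3⟩ := Nat.find_spec hρex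
  obtain ⟨hσ1, hσ2, hσ3⟩ := Nat.find_spec hσex
  have hρmin : ∀ x, 0 < x → x % t = r % t → k ∣ x → ρ ≤ x :=
    fun x h1 h2 h3 => Nat.find_le ⟨h1, h2, h3⟩
  have hσmin : ∀ x, 0 < x → x % t = s % t → k ∣ x → σ ≤ x :=
    fun x h1 h2 h3 => Nat.find_le ⟨h1, h2, h3⟩
  refine ⟨r * s + σ * (ρ + k * t), ?_⟩
  intro n hn
  have hDr := Dkx_eq_w k t r n hk
  have hDs := Dkx_eq_w k t s n hk
  have hWle : ∀ X, X ≤ n →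
      ∑ x ∈ range (X + 1), w k t s n x ≤ ∑ x ∈ range (X + 1), w k t r n x := by
    intro X hX
    rw [w_partial k t s n X hX, w_partial k t r n X hX]
    exact master_le hk ht hcop hr1 hrs hst hkr hρ1 hρ2 hρ3 hρmin hσ1 hσ2 hσ3 hσmin X
  have hWlt : (∑ x ∈ range (n + 1), w k t s n x) + 1 ≤ ∑ x ∈ range (n + 1), w k t r n x := by
    rw [w_partial k t s n n (le_refl n), w_partial k t r n n (le_refl n)]
    exact master_lt hk ht hcop hr1 hrs hst hrt hkr hρ1 hρ2 hρ3 hρmin hσ1 hσ2 hσ3 hσmin n hn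
  have key := abel_int (fun x => (w k t r n x : ℤ) - w k t s n x)
      (fun x => (pk k (n - x) : ℤ)) n
      (fun X hX => by
        rw [Finset.sum_sub_distrib, ← Nat.cast_sum, ← Nat.cast_sum]
        exact sub_nonneg.mpr (Nat.cast_le.mpr (hWle X hX)))
      (fun x hx => by
        show ((pk k (n - (x + 1)) : ℤ)) ≤ ((pk k (n - x) : ℤ))
        exact_mod_cast pk_mono k hk (by omega))
      (by
        show (0 : ℤ) ≤ ((pk k (n - n) : ℤ))
        positivity)
  have hsum1 : ∑ x ∈ range (n + 1), ((w k t r n x : ℤ) - w k t s n x) * (pk k (n - x) : ℤ)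
      = (Dkx k t r n : ℤ) - Dkx k t s n := by
    rw [hDr, hDs]
    push_cast
    rw [← Finset.sum_sub_distrib]
    apply Finset.sum_congr rfl
    intro x _
    ring
  have hsum2 : (1 : ℤ) ≤ ∑ x ∈ range (n + 1), ((w k t r n x : ℤ) - w k t s n x) := by
    rw [Finset.sum_sub_distrib, ← Nat.cast_sum, ← Nat.cast_sum]
    have h2 : ((∑ x ∈ range (n + 1), w k t s n x : ℕ) : ℤ) + 1
        ≤ ((∑ x ∈ range (n + 1), w k t r n x : ℕ) : ℤ) := by exact_mod_cast hWlt
    omega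
  have hfn : ((pk k (n - n) : ℤ)) = 1 := by
    rw [Nat.sub_self, pk_zero]
    norm_num
  have key' : (∑ x ∈ range (n + 1), ((w k t r n x : ℤ) - w k t s n x)) * ((pk k (n - n) : ℤ))
      ≤ ∑ x ∈ range (n + 1), ((w k t r n x : ℤ) - w k t s n x) * ((pk k (n - x) : ℤ)) := key
  rw [hsum1, hfn, mul_one] at key'
  have : (Dkx k t s n : ℤ) < Dkx k t r n := by
    have h3 := le_trans hsum2 key'
    omega
  exact_mod_cast this
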